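/- arXiv:math/0201177 — 5 statements merged into one kernel-verified Lean document; each statement's English description precedes it below -/
import Mathlib

section
/- Fix a positive integer k. For natural numbers a, b, c with 0 ≤ a, b, c ≤ k, define the quantum admissibility condition: a ≤ b + c, b ≤ c + a, c ≤ a + b, a + b + c even, and a + b + c ≤ 2k. Then there exist matrices A ∈ C_a, B ∈ C_b, C ∈ C_c in SU(2) with ABC = 1, where C_j denotes the conjugacy class of SU(2) with trace 2 cos(πj/k), if and only if the real numbers πa/k, πb/k, πc/k satisfy: each is at most the sum of the other two, and their total is at most 2π. -/
open Real Matrix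

/-- The special unitary group `SU(2)` of 2×2 complex matrices. -/
abbrev SU2 := Matrix.specialUnitaryGroup (Fin 2) ℂ

noncomputable instance : Group SU2 :=
  { (inferInstance : Monoid SU2) with
    inv := fun A => ⟨star A.1, by
      have h := Matrix.mem_specialUnitaryGroup_iff.1 A.2
      refine Matrix.mem_specialUnitaryGroup_iff.2 ⟨Unitary.star_mem h.1, ?_⟩
      simp [Matrix.star_eq_conjTranspose, Matrix.det_conjTranspose, h.2]⟩
    inv_mul_cancel := fun A => Subtype.ext ((Matrix.mem_specialUnitaryGroup_iff.1 A.2).1.1) }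

lemma su2_entries (X : SU2) :
    X.1 1 1 = starRingEnd ℂ (X.1 0 0) ∧ X.1 1 0 = -starRingEnd ℂ (X.1 0 1) ∧
    Complex.normSq (X.1 0 0) + Complex.normSq (X.1 0 1) = 1 := by
  have h := Matrix.mem_specialUnitaryGroup_iff.1 X.2
  have hu : X.1 * star X.1 = 1 := Matrix.mem_unitaryGroup_iff.1 h.1
  have hadj : X.1 * X.1.adjugate = 1 := by
    rw [Matrix.mul_adjugate, h.2, one_smul]
  have h1 : (X.1)⁻¹ = star X.1 := Matrix.inv_eq_right_inv hu
  have h2 : (X.1)⁻¹ = X.1.adjugate := Matrix.inv_eq_right_inv hadj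
  have he : star X.1 = X.1.adjugate := h1 ▸ h2
  rw [Matrix.star_eq_conjTranspose, Matrix.adjugate_fin_two] at he
  have e00 : starRingEnd ℂ (X.1 0 0) = X.1 1 1 := by
    have := congrFun (congrFun he 0) 0
    simpa [Matrix.conjTranspose_apply] using this
  have e01 : starRingEnd ℂ (X.1 1 0) = -X.1 0 1 := by
    have := congrFun (congrFun he 0) 1
    simpa [Matrix.conjTranspose_apply] using this
  refine ⟨e00.symm, ?_, ?_⟩
  · have := congrArg (starRingEnd ℂ) e01
    simpa using this
  · have hdet := h.2
    rw [Matrix.det_fin_two] at hdet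
    rw [← e00] at hdet
    have e10 : X.1 1 0 = -starRingEnd ℂ (X.1 0 1) := by
      have := congrArg (starRingEnd ℂ) e01; simpa using this
    rw [e10] at hdet
    have : X.1 0 0 * starRingEnd ℂ (X.1 0 0) + X.1 0 1 * starRingEnd ℂ (X.1 0 1) = 1 := by
      linear_combination hdet
    have h00 := Complex.mul_conj (X.1 0 0)
    have h01 := Complex.mul_conj (X.1 0 1)
    rw [h00, h01] at this
    exact_mod_cast this

lemma cs3 (u v w u' v' w' : ℝ) :
    (u*u'+v*v'+w*w')^2 ≤ (u^2+v^2+w^2)*(u'^2+v'^2+w'^2) := by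
  nlinarith [sq_nonneg (u*v'-v*u'), sq_nonneg (u*w'-w*u'), sq_nonneg (v*w'-w*v')]

lemma abs3_le (S a b : ℝ) (ha : 0 ≤ a) (hb : 0 ≤ b) (h : S^2 ≤ (a*b)^2) : |S| ≤ a*b := by
  have hab : 0 ≤ a*b := mul_nonneg ha hb
  rw [abs_le]; constructor <;> nlinarith

lemma su2_trace_mul_bound (X Y : SU2) (x y t : ℝ)
    (hx0 : 0 ≤ x) (hx1 : x ≤ π) (hy0 : 0 ≤ y) (hy1 : y ≤ π)
    (htX : Matrix.trace (X : Matrix (Fin 2) (Fin 2) ℂ) = ((2 * Real.cos x : ℝ) : ℂ))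
    (htY : Matrix.trace (Y : Matrix (Fin 2) (Fin 2) ℂ) = ((2 * Real.cos y : ℝ) : ℂ))
    (ht : Matrix.trace (X.1 * Y.1) = ((t : ℝ) : ℂ)) :
    |t / 2 - Real.cos x * Real.cos y| ≤ Real.sin x * Real.sin y := by
  obtain ⟨hX1, hX2, hX3⟩ := su2_entries X
  obtain ⟨hY1, hY2, hY3⟩ := su2_entries Y
  rw [Matrix.trace_fin_two, hX1] at htX
  rw [Matrix.trace_fin_two, hY1] at htY
  have hpre : (X.1 0 0).re = Real.cos x := by
    have := congrArg Complex.re htX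
    simp only [Complex.add_re, Complex.conj_re, Complex.ofReal_re] at this
    linarith [this]
  have hrre : (Y.1 0 0).re = Real.cos y := by
    have := congrArg Complex.re htY
    simp only [Complex.add_re, Complex.conj_re, Complex.ofReal_re] at this
    linarith [this]
  rw [Matrix.trace_fin_two, Matrix.mul_apply, Matrix.mul_apply, Fin.sum_univ_two,
    Fin.sum_univ_two, hX1, hX2, hY1, hY2] at ht
  have htre := congrArg Complex.re ht
  simp only [Complex.add_re, Complex.mul_re, Complex.mul_im, Complex.neg_re, Complex.neg_im,
    Complex.conj_re, Complex.conj_im, Complex.ofReal_re] at htre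
  rw [Complex.normSq_apply, Complex.normSq_apply] at hX3 hY3
  have hsinx : Real.sin x ^ 2 = (X.1 0 0).im^2 + (X.1 0 1).re^2 + (X.1 0 1).im^2 := by
    have h2 := Real.sin_sq_add_cos_sq x
    linear_combination h2 - hX3 + ((X.1 0 0).re + Real.cos x) * hpre
  have hsiny : Real.sin y ^ 2 = (Y.1 0 0).im^2 + (Y.1 0 1).re^2 + (Y.1 0 1).im^2 := by
    have h2 := Real.sin_sq_add_cos_sq y
    linear_combination h2 - hY3 + ((Y.1 0 0).re + Real.cos y) * hrre
  have hsx : 0 ≤ Real.sin x := Real.sin_nonneg_of_nonneg_of_le_pi hx0 hx1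
  have hsy : 0 ≤ Real.sin y := Real.sin_nonneg_of_nonneg_of_le_pi hy0 hy1
  have key : t / 2 - Real.cos x * Real.cos y =
      -((X.1 0 0).im * (Y.1 0 0).im + (X.1 0 1).re * (Y.1 0 1).re
        + (X.1 0 1).im * (Y.1 0 1).im) := by
    rw [← hpre, ← hrre]; linarith [htre]
  rw [key, abs_neg]
  refine abs3_le _ _ _ hsx hsy ?_
  calc ((X.1 0 0).im * (Y.1 0 0).im + (X.1 0 1).re * (Y.1 0 1).re
        + (X.1 0 1).im * (Y.1 0 1).im)^2
      ≤ ((X.1 0 0).im^2 + (X.1 0 1).re^2 + (X.1 0 1).im^2) *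
        ((Y.1 0 0).im^2 + (Y.1 0 1).re^2 + (Y.1 0 1).im^2) := cs3 _ _ _ _ _ _
    _ = (Real.sin x * Real.sin y)^2 := by rw [← hsinx, ← hsiny]; ring

lemma angle_cos_iff (α β γ : ℝ) (hα0 : 0 ≤ α) (hα1 : α ≤ π) (hβ0 : 0 ≤ β) (hβ1 : β ≤ π)
    (hγ0 : 0 ≤ γ) (hγ1 : γ ≤ π) :
    |Real.cos γ - Real.cos α * Real.cos β| ≤ Real.sin α * Real.sin β ↔
      (α ≤ β + γ ∧ β ≤ γ + α ∧ γ ≤ α + β ∧ α + β + γ ≤ 2 * π) := by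
  rw [abs_le]
  have hadd : Real.cos (α + β) = Real.cos α * Real.cos β - Real.sin α * Real.sin β :=
    Real.cos_add α β
  have hsub : Real.cos (α - β) = Real.cos α * Real.cos β + Real.sin α * Real.sin β :=
    Real.cos_sub α β
  constructor
  · rintro ⟨h1, h2⟩
    have hA : Real.cos (α + β) ≤ Real.cos γ := by linarith
    have hB : Real.cos γ ≤ Real.cos (α - β) := by linarith
    have habs : |α - β| ≤ γ := by
      by_contra hcon
      push_neg at hcon
      have habsle : |α - β| ≤ π := abs_sub_le_iff.mpr ⟨by linarith, by linarith⟩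
      have := Real.cos_lt_cos_of_nonneg_of_le_pi hγ0 habsle hcon
      rw [Real.cos_abs] at this
      linarith
    rw [abs_sub_le_iff] at habs
    rcases le_or_gt (α + β) π with hle | hgt
    · have hγab : γ ≤ α + β := by
        by_contra hcon
        push_neg at hcon
        have := Real.cos_lt_cos_of_nonneg_of_le_pi (by linarith : (0:ℝ) ≤ α + β) hγ1 hcon
        linarith
      exact ⟨by linarith, by linarith, hγab, by linarith⟩
    · have heq : Real.cos (α + β) = Real.cos (2 * π - (α + β)) := by
        rw [Real.cos_two_pi_sub]
      have hsum : γ ≤ 2 * π - (α + β) := by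
        by_contra hcon
        push_neg at hcon
        have := Real.cos_lt_cos_of_nonneg_of_le_pi (by linarith : (0:ℝ) ≤ 2 * π - (α + β)) hγ1 hcon
        rw [← heq] at this
        linarith
      exact ⟨by linarith, by linarith, by linarith, by linarith⟩
  · rintro ⟨i1, i2, i3, i4⟩
    constructor
    · -- cos (α+β) ≤ cos γ
      rcases le_or_gt (α + β) π with hle | hgt
      · have := Real.cos_le_cos_of_nonneg_of_le_pi hγ0 hle i3
        linarith
      · have heq : Real.cos (α + β) = Real.cos (2 * π - (α + β)) := by
          rw [Real.cos_two_pi_sub]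
        have := Real.cos_le_cos_of_nonneg_of_le_pi hγ0 (by linarith : 2 * π - (α + β) ≤ π)
          (by linarith)
        rw [← heq] at this
        linarith
    · -- cos γ ≤ cos (α - β)
      have habs : |α - β| ≤ γ := abs_sub_le_iff.mpr ⟨by linarith, by linarith⟩
      have := Real.cos_le_cos_of_nonneg_of_le_pi (abs_nonneg (α - β)) hγ1 habs
      rw [Real.cos_abs] at this
      linarith

lemma mk_su2 (z w : ℂ) (h : Complex.normSq z + Complex.normSq w = 1) :
    !![z, w; -(starRingEnd ℂ w), starRingEnd ℂ z] ∈ Matrix.specialUnitaryGroup (Fin 2) ℂ := by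
  have hzw : z * starRingEnd ℂ z + w * starRingEnd ℂ w = 1 := by
    rw [Complex.mul_conj, Complex.mul_conj]
    exact_mod_cast h
  refine Matrix.mem_specialUnitaryGroup_iff.2 ⟨Matrix.mem_unitaryGroup_iff.2 ?_, ?_⟩
  · rw [Matrix.star_eq_conjTranspose]
    ext i j
    fin_cases i <;> fin_cases j <;>
      simp [Matrix.mul_apply, Fin.sum_univ_two, Matrix.conjTranspose_apply, Matrix.one_apply] <;>
      ring_nf
    · linear_combination hzw
    · linear_combination hzw
  · rw [Matrix.det_fin_two_of]
    linear_combination hzw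

lemma su2_construct (α β γ : ℝ) (hα0 : 0 ≤ α) (hα1 : α ≤ π) (hβ0 : 0 ≤ β) (hβ1 : β ≤ π)
    (hbound : |Real.cos γ - Real.cos α * Real.cos β| ≤ Real.sin α * Real.sin β) :
    ∃ A B C : SU2,
      Matrix.trace (A : Matrix (Fin 2) (Fin 2) ℂ) = ((2 * Real.cos α : ℝ) : ℂ) ∧
      Matrix.trace (B : Matrix (Fin 2) (Fin 2) ℂ) = ((2 * Real.cos β : ℝ) : ℂ) ∧
      Matrix.trace (C : Matrix (Fin 2) (Fin 2) ℂ) = ((2 * Real.cos γ : ℝ) : ℂ) ∧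
      A * B * C = 1 := by
  -- find s with |s| ≤ 1 and cos γ = cos α cos β - sin α sin β * s
  obtain ⟨s, hs1, hγ⟩ : ∃ s : ℝ, |s| ≤ 1 ∧
      Real.cos γ = Real.cos α * Real.cos β - Real.sin α * Real.sin β * s := by
    by_cases hp : Real.sin α * Real.sin β = 0
    · refine ⟨0, by norm_num, ?_⟩
      rw [hp] at hbound
      have h0 := abs_eq_zero.1 (le_antisymm hbound (abs_nonneg _))
      linarith [h0]
    · have hppos : 0 < Real.sin α * Real.sin β :=
        lt_of_le_of_ne (mul_nonneg (Real.sin_nonneg_of_nonneg_of_le_pi hα0 hα1)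
          (Real.sin_nonneg_of_nonneg_of_le_pi hβ0 hβ1)) (Ne.symm hp)
      refine ⟨(Real.cos α * Real.cos β - Real.cos γ) / (Real.sin α * Real.sin β), ?_, ?_⟩
      · rw [abs_div, abs_of_pos hppos, div_le_one hppos, abs_sub_comm]
        exact hbound
      · field_simp
        rw [mul_div_cancel_left₀ _ hp]; ring
  have hs2 : s ^ 2 ≤ 1 := by
    rw [abs_le] at hs1; nlinarith
  set u : ℝ := Real.sqrt (1 - s ^ 2) with hu
  have hu2 : u ^ 2 = 1 - s ^ 2 := Real.sq_sqrt (by linarith)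
  -- the matrices
  set zA : ℂ := (Real.cos α : ℝ) + (Real.sin α : ℝ) * Complex.I with hzA
  set zB : ℂ := (Real.cos β : ℝ) + ((Real.sin β * s : ℝ) : ℂ) * Complex.I with hzB
  set wB : ℂ := ((Real.sin β * u : ℝ) : ℂ) * Complex.I with hwB
  have hnA : Complex.normSq zA + Complex.normSq (0 : ℂ) = 1 := by
    rw [hzA, Complex.normSq_add_mul_I, Complex.normSq_zero, add_zero]
    linarith [Real.sin_sq_add_cos_sq α]
  have hnB : Complex.normSq zB + Complex.normSq wB = 1 := by
    rw [hzB, hwB, Complex.normSq_add_mul_I, Complex.normSq_mul, Complex.normSq_I, mul_one,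
      Complex.normSq_ofReal]
    have hsb := Real.sin_sq_add_cos_sq β
    nlinarith [hu2]
  set A : SU2 := ⟨!![zA, 0; -(starRingEnd ℂ (0:ℂ)), starRingEnd ℂ zA], mk_su2 zA 0 hnA⟩ with hA
  set B : SU2 := ⟨!![zB, wB; -(starRingEnd ℂ wB), starRingEnd ℂ zB], mk_su2 zB wB hnB⟩ with hB
  refine ⟨A, B, (A * B)⁻¹, ?_, ?_, ?_, mul_inv_cancel _⟩
  · rw [Matrix.trace_fin_two]
    show zA + starRingEnd ℂ zA = _
    rw [hzA]
    simp [Complex.ext_iff]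
    ring
  · rw [Matrix.trace_fin_two]
    show zB + starRingEnd ℂ zB = _
    rw [hzB]
    simp [Complex.ext_iff]
    ring
  · have hcoe : (((A * B)⁻¹ : SU2) : Matrix (Fin 2) (Fin 2) ℂ) = star ((A : Matrix (Fin 2) (Fin 2) ℂ) * (B : Matrix (Fin 2) (Fin 2) ℂ)) := rfl
    rw [hcoe, Matrix.star_eq_conjTranspose, Matrix.trace_conjTranspose]
    have htr : Matrix.trace ((A : Matrix (Fin 2) (Fin 2) ℂ) * (B : Matrix (Fin 2) (Fin 2) ℂ)) = ((2 * Real.cos γ : ℝ) : ℂ) := by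
      rw [Matrix.trace_fin_two, Matrix.mul_apply, Matrix.mul_apply, Fin.sum_univ_two, Fin.sum_univ_two]
      show zA * zB + 0 * (-(starRingEnd ℂ wB)) + ((-(starRingEnd ℂ (0:ℂ))) * wB + starRingEnd ℂ zA * starRingEnd ℂ zB) = _
      rw [hzA, hzB]
      simp only [map_zero, neg_zero, zero_mul, mul_zero, add_zero, zero_add]
      rw [hγ]
      apply Complex.ext <;>
        simp [Complex.add_re, Complex.add_im, Complex.mul_re, Complex.mul_im] <;> ring
    rw [htr]
    exact Complex.conj_ofReal _

/-- for `0 ≤ a, b, c ≤ k`, there exist `A ∈ C_a`, `B ∈ C_b`, `C ∈ C_c` in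
`SU(2)` (conjugacy classes with traces `2cos(πj/k)`) with `ABC = 1` if and only if the
angles `πa/k, πb/k, πc/k` satisfy the spherical triangle inequalities and sum to at most
`2π`. -/
theorem su2_triple_product_iff (k : ℕ) (hk : 0 < k) (a b c : ℕ)
    (ha : a ≤ k) (hb : b ≤ k) (hc : c ≤ k) :
    (∃ A B C : SU2,
        Matrix.trace (A : Matrix (Fin 2) (Fin 2) ℂ) = ((2 * Real.cos (π * a / k) : ℝ) : ℂ) ∧
        Matrix.trace (B : Matrix (Fin 2) (Fin 2) ℂ) = ((2 * Real.cos (π * b / k) : ℝ) : ℂ) ∧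
        Matrix.trace (C : Matrix (Fin 2) (Fin 2) ℂ) = ((2 * Real.cos (π * c / k) : ℝ) : ℂ) ∧
        A * B * C = 1) ↔
      (π * a / k ≤ π * b / k + π * c / k ∧
       π * b / k ≤ π * c / k + π * a / k ∧
       π * c / k ≤ π * a / k + π * b / k ∧
       π * a / k + π * b / k + π * c / k ≤ 2 * π) := by
  classical
  have hk' : (0:ℝ) < (k:ℝ) := by exact_mod_cast hk
  set α := π * (a:ℝ) / k with hα
  set β := π * (b:ℝ) / k with hβ
  set γ := π * (c:ℝ) / k with hγdef
  have hbnd : ∀ (j : ℕ), j ≤ k → 0 ≤ π * (j:ℝ) / k ∧ π * (j:ℝ) / k ≤ π := by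
    intro j hj
    constructor
    · positivity
    · rw [div_le_iff₀ hk']
      have : (j:ℝ) ≤ (k:ℝ) := by exact_mod_cast hj
      nlinarith [Real.pi_pos]
  obtain ⟨hα0, hα1⟩ := hbnd a ha
  obtain ⟨hβ0, hβ1⟩ := hbnd b hb
  obtain ⟨hγ0, hγ1⟩ := hbnd c hc
  rw [← angle_cos_iff α β γ hα0 hα1 hβ0 hβ1 hγ0 hγ1]
  constructor
  · rintro ⟨A, B, C, hA, hB, hC, hABC⟩
    have hAB : A * B = C⁻¹ := eq_inv_of_mul_eq_one_left hABC
    have hcoe : (A : Matrix (Fin 2) (Fin 2) ℂ) * (B : Matrix (Fin 2) (Fin 2) ℂ)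
        = star (C : Matrix (Fin 2) (Fin 2) ℂ) := by
      have : ((A * B : SU2) : Matrix (Fin 2) (Fin 2) ℂ) = ((C⁻¹ : SU2) : Matrix (Fin 2) (Fin 2) ℂ) := by
        rw [hAB]
      exact this
    have htAB : Matrix.trace ((A : Matrix (Fin 2) (Fin 2) ℂ) * (B : Matrix (Fin 2) (Fin 2) ℂ))
        = ((2 * Real.cos γ : ℝ) : ℂ) := by
      rw [hcoe, Matrix.star_eq_conjTranspose, Matrix.trace_conjTranspose, hC]
      exact Complex.conj_ofReal _
    have hbd := su2_trace_mul_bound A B α β (2 * Real.cos γ) hα0 hα1 hβ0 hβ1 hA hB htAB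
    have h2 : 2 * Real.cos γ / 2 = Real.cos γ := by ring
    rwa [h2] at hbd
  · intro hcond
    exact su2_construct α β γ hα0 hα1 hβ0 hβ1 hcond
end

section
/- For unit vectors realization: a spherical triangle with side lengths ℓ₁, ℓ₂, ℓ₃ ∈ [0, π] exists (i.e., there are points p, q, r on the unit sphere S² with d(q,r) = ℓ₁, d(r,p) = ℓ₂, d(p,q) = ℓ₃, where d is the spherical/geodesic distance) if and only if each ℓᵢ is at most the sum of the other two and ℓ₁ + ℓ₂ + ℓ₃ ≤ 2π. -/
open Real

private lemma arccos_le_of_cos_le {c y : ℝ} (hy0 : 0 ≤ y) (hyp : y ≤ π)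
    (h : Real.cos y ≤ c) : Real.arccos c ≤ y := by
  rcases le_or_gt c 1 with hc | hc
  · have h1 : Real.arccos c ≤ Real.arccos (Real.cos y) :=
      Real.strictAntiOn_arccos.antitoneOn ⟨Real.neg_one_le_cos y, Real.cos_le_one y⟩
        ⟨le_trans (Real.neg_one_le_cos y) h, hc⟩ h
    rwa [Real.arccos_cos hy0 hyp] at h1
  · rw [Real.arccos_of_one_le hc.le]; exact hy0

private lemma le_arccos_of_le_cos {c y : ℝ} (hy0 : 0 ≤ y) (hyp : y ≤ π)
    (h : c ≤ Real.cos y) : y ≤ Real.arccos c := by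
  rcases le_or_gt (-1) c with hc | hc
  · have h1 : Real.arccos (Real.cos y) ≤ Real.arccos c :=
      Real.strictAntiOn_arccos.antitoneOn ⟨hc, h.trans (Real.cos_le_one y)⟩
        ⟨Real.neg_one_le_cos y, Real.cos_le_one y⟩ h
    rwa [Real.arccos_cos hy0 hyp] at h1
  · rw [Real.arccos_of_le_neg_one hc.le]; exact hyp

private lemma gram_key (p q r : EuclideanSpace ℝ (Fin 3)) (hp : ‖p‖ = 1)
    (hq : ‖q‖ = 1) (hr : ‖r‖ = 1) :
    ((inner ℝ q r : ℝ) - (inner ℝ p q : ℝ) * (inner ℝ p r : ℝ)) ^ 2 ≤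
      (1 - (inner ℝ p q : ℝ) ^ 2) * (1 - (inner ℝ p r : ℝ) ^ 2) := by
  have hpp : (inner ℝ p p : ℝ) = 1 := by rw [real_inner_self_eq_norm_sq, hp]; norm_num
  have hqq : (inner ℝ q q : ℝ) = 1 := by rw [real_inner_self_eq_norm_sq, hq]; norm_num
  have hrr : (inner ℝ r r : ℝ) = 1 := by rw [real_inner_self_eq_norm_sq, hr]; norm_num
  have key := real_inner_mul_inner_self_le (q - (inner ℝ p q : ℝ) • p)
    (r - (inner ℝ p r : ℝ) • p)
  simp only [inner_sub_left, inner_sub_right, real_inner_smul_left, real_inner_smul_right,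
    hpp, hqq, hrr] at key
  rw [← real_inner_comm q p, ← real_inner_comm r p] at key
  nlinarith [key]

private lemma norm_eq_one_of (x : EuclideanSpace ℝ (Fin 3)) (h : (inner ℝ x x : ℝ) = 1) :
    ‖x‖ = 1 := by
  have h2 : ‖x‖ ^ 2 = 1 := by rw [← real_inner_self_eq_norm_sq, h]
  nlinarith [norm_nonneg x]

set_option maxHeartbeats 1600000 in
/-- a spherical triangle on the unit sphere `S² ⊆ ℝ³` with side lengths
`ℓ₁, ℓ₂, ℓ₃ ∈ [0, π]` (geodesic distances `arccos⟨·,·⟩`) exists if and only if each side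
is at most the sum of the other two and `ℓ₁ + ℓ₂ + ℓ₃ ≤ 2π`. -/
theorem spherical_triangle_iff (l1 l2 l3 : ℝ)
    (h1 : l1 ∈ Set.Icc 0 π) (h2 : l2 ∈ Set.Icc 0 π) (h3 : l3 ∈ Set.Icc 0 π) :
    (∃ p q r : EuclideanSpace ℝ (Fin 3), ‖p‖ = 1 ∧ ‖q‖ = 1 ∧ ‖r‖ = 1 ∧
        Real.arccos (inner ℝ q r) = l1 ∧ Real.arccos (inner ℝ r p) = l2 ∧
        Real.arccos (inner ℝ p q) = l3) ↔
      (l1 ≤ l2 + l3 ∧ l2 ≤ l3 + l1 ∧ l3 ≤ l1 + l2 ∧ l1 + l2 + l3 ≤ 2 * π) := by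
  obtain ⟨h10, h1p⟩ := h1
  obtain ⟨h20, h2p⟩ := h2
  obtain ⟨h30, h3p⟩ := h3
  have s2nn : 0 ≤ Real.sin l2 := Real.sin_nonneg_of_nonneg_of_le_pi h20 h2p
  have s3nn : 0 ≤ Real.sin l3 := Real.sin_nonneg_of_nonneg_of_le_pi h30 h3p
  constructor
  · rintro ⟨p, q, r, hp, hq, hr, hl1, hl2, hl3⟩
    set a : ℝ := inner ℝ p q with ha
    set b : ℝ := inner ℝ p r with hb
    set c : ℝ := inner ℝ q r with hc
    have hab : |a| ≤ 1 := by
      have := abs_real_inner_le_norm p q; rwa [hp, hq, one_mul] at this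
    have hbb : |b| ≤ 1 := by
      have := abs_real_inner_le_norm p r; rwa [hp, hr, one_mul] at this
    have hcb : |c| ≤ 1 := by
      have := abs_real_inner_le_norm q r; rwa [hq, hr, one_mul] at this
    have hrp : (inner ℝ r p : ℝ) = b := (real_inner_comm r p).symm
    rw [hrp] at hl2
    have hca : Real.cos l1 = c := by
      rw [← hl1]; exact Real.cos_arccos (abs_le.1 hcb).1 (abs_le.1 hcb).2
    have hcb2 : Real.cos l2 = b := by
      rw [← hl2]; exact Real.cos_arccos (abs_le.1 hbb).1 (abs_le.1 hbb).2
    have hca3 : Real.cos l3 = a := by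
      rw [← hl3]; exact Real.cos_arccos (abs_le.1 hab).1 (abs_le.1 hab).2
    have gram := gram_key p q r hp hq hr
    rw [← ha, ← hb, ← hc] at gram
    have hs2 : Real.sin l2 ^ 2 = 1 - b ^ 2 := by rw [Real.sin_sq, hcb2]
    have hs3 : Real.sin l3 ^ 2 = 1 - a ^ 2 := by rw [Real.sin_sq, hca3]
    have hDnn : 0 ≤ Real.sin l2 * Real.sin l3 := mul_nonneg s2nn s3nn
    have hprod : (Real.sin l2 * Real.sin l3) ^ 2 = (1 - a ^ 2) * (1 - b ^ 2) := by
      rw [mul_pow, hs2, hs3]; ring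
    have hup : c ≤ Real.cos l2 * Real.cos l3 + Real.sin l2 * Real.sin l3 := by
      rw [hcb2, hca3]
      nlinarith [gram, hprod, hDnn]
    have hlo : Real.cos l2 * Real.cos l3 - Real.sin l2 * Real.sin l3 ≤ c := by
      rw [hcb2, hca3]
      nlinarith [gram, hprod, hDnn]
    -- l1 >= |l2 - l3|
    have habs : |l2 - l3| ≤ l1 := by
      have hy0 : (0:ℝ) ≤ |l2 - l3| := abs_nonneg _
      have hyp : |l2 - l3| ≤ π := by
        rw [abs_le]; constructor <;> linarith
      have hcos : c ≤ Real.cos |l2 - l3| := by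
        rw [Real.cos_abs, Real.cos_sub]; linarith
      have := le_arccos_of_le_cos hy0 hyp hcos
      rwa [hl1] at this
    have habs' := abs_le.1 habs
    refine ⟨?_, by linarith [habs'.1, habs'.2], by linarith [habs'.1, habs'.2], ?_⟩
    · rcases le_or_gt (l2 + l3) π with hsum | hsum
      · have hcos : Real.cos (l2 + l3) ≤ c := by rw [Real.cos_add]; linarith
        have := arccos_le_of_cos_le (by linarith) hsum hcos
        rwa [hl1] at this
      · linarith
    · rcases le_or_gt (l2 + l3) π with hsum | hsum
      · have hcos : Real.cos (l2 + l3) ≤ c := by rw [Real.cos_add]; linarith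
        have := arccos_le_of_cos_le (by linarith) hsum hcos
        rw [hl1] at this
        linarith
      · have hy0 : (0:ℝ) ≤ 2 * π - (l2 + l3) := by linarith
        have hyp : 2 * π - (l2 + l3) ≤ π := by linarith
        have hcosval : Real.cos (2 * π - (l2 + l3)) = Real.cos (l2 + l3) := by
          rw [Real.cos_sub, Real.cos_two_pi, Real.sin_two_pi]; ring
        have hcos : Real.cos (2 * π - (l2 + l3)) ≤ c := by
          rw [hcosval, Real.cos_add]; linarith
        have := arccos_le_of_cos_le hy0 hyp hcos
        rw [hl1] at this
        linarith
  · rintro ⟨g1, g2, g3, g4⟩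
    set D : ℝ := Real.sin l2 * Real.sin l3 with hDdef
    have hDnn : 0 ≤ D := mul_nonneg s2nn s3nn
    set t : ℝ := (Real.cos l1 - Real.cos l2 * Real.cos l3) / D with htdef
    have hup : Real.cos l1 ≤ Real.cos l2 * Real.cos l3 + D := by
      have habs : |l2 - l3| ≤ l1 := by
        rw [abs_le]; constructor <;> linarith
      have hc : Real.cos l1 ≤ Real.cos |l2 - l3| :=
        Real.cos_le_cos_of_nonneg_of_le_pi (abs_nonneg _) h1p habs
      rw [Real.cos_abs, Real.cos_sub] at hc
      linarith
    have hlo : Real.cos l2 * Real.cos l3 - D ≤ Real.cos l1 := by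
      rcases le_or_gt (l2 + l3) π with hsum | hsum
      · have hc : Real.cos (l2 + l3) ≤ Real.cos l1 :=
          Real.cos_le_cos_of_nonneg_of_le_pi h10 hsum g1
        rw [Real.cos_add] at hc; linarith
      · have hc : Real.cos (2 * π - (l2 + l3)) ≤ Real.cos l1 :=
          Real.cos_le_cos_of_nonneg_of_le_pi h10 (by linarith) (by linarith)
        rw [Real.cos_sub, Real.cos_two_pi, Real.sin_two_pi, Real.cos_add] at hc
        rw [hDdef]; linarith
    have hkey : D * t = Real.cos l1 - Real.cos l2 * Real.cos l3 := by
      rcases hDnn.eq_or_lt with h0 | hpos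
      · have hc : Real.cos l1 = Real.cos l2 * Real.cos l3 := by
          rw [← h0] at hup hlo; linarith
        rw [htdef, ← h0, div_zero, mul_zero, hc, sub_self]
      · rw [htdef, mul_div_cancel₀ _ (ne_of_gt hpos)]
    have htsq : t ^ 2 ≤ 1 := by
      rcases hDnn.eq_or_lt with h0 | hpos
      · rw [htdef, ← h0, div_zero]; norm_num
      · have ht1 : t ≤ 1 := by
          rw [htdef, div_le_one hpos]; linarith
        have ht2 : -1 ≤ t := by
          rw [htdef, le_div_iff₀ hpos]; linarith
        exact (sq_le_one_iff_abs_le_one t).2 (abs_le.2 ⟨ht2, ht1⟩)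
    set s : ℝ := Real.sqrt (1 - t ^ 2) with hsdef
    have hs2 : s ^ 2 = 1 - t ^ 2 := Real.sq_sqrt (by linarith)
    have expand : ∀ x1 x2 x3 y1 y2 y3 : ℝ,
        (inner ℝ ((WithLp.equiv 2 (Fin 3 → ℝ)).symm ![x1, x2, x3])
          ((WithLp.equiv 2 (Fin 3 → ℝ)).symm ![y1, y2, y3]) : ℝ)
          = x1 * y1 + x2 * y2 + x3 * y3 := by
      intro x1 x2 x3 y1 y2 y3
      simp only [PiLp.inner_apply, Fin.sum_univ_three, WithLp.equiv_symm_apply, PiLp.toLp_apply,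
        Matrix.cons_val_zero, Matrix.cons_val_one, Matrix.head_cons, Matrix.cons_val_two,
        Matrix.tail_cons, RCLike.inner_apply, conj_trivial]
      ring
    refine ⟨(WithLp.equiv 2 (Fin 3 → ℝ)).symm ![1, 0, 0],
      (WithLp.equiv 2 (Fin 3 → ℝ)).symm ![Real.cos l3, Real.sin l3, 0],
      (WithLp.equiv 2 (Fin 3 → ℝ)).symm ![Real.cos l2, Real.sin l2 * t, Real.sin l2 * s],
      ?_, ?_, ?_, ?_, ?_, ?_⟩
    · apply norm_eq_one_of
      rw [expand]; norm_num
    · apply norm_eq_one_of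
      rw [expand]
      linear_combination Real.sin_sq_add_cos_sq l3
    · apply norm_eq_one_of
      rw [expand]
      linear_combination Real.sin_sq_add_cos_sq l2 + Real.sin l2 ^ 2 * hs2
    · rw [show (inner ℝ ((WithLp.equiv 2 (Fin 3 → ℝ)).symm ![Real.cos l3, Real.sin l3, 0])
          ((WithLp.equiv 2 (Fin 3 → ℝ)).symm
            ![Real.cos l2, Real.sin l2 * t, Real.sin l2 * s]) : ℝ) = Real.cos l1 by
          rw [expand]
          have hDt : Real.sin l3 * (Real.sin l2 * t) = D * t := by rw [hDdef]; ring
          rw [hDt, hkey]; ring]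
      exact Real.arccos_cos h10 h1p
    · rw [show (inner ℝ ((WithLp.equiv 2 (Fin 3 → ℝ)).symm
          ![Real.cos l2, Real.sin l2 * t, Real.sin l2 * s])
          ((WithLp.equiv 2 (Fin 3 → ℝ)).symm ![(1:ℝ), 0, 0]) : ℝ) = Real.cos l2 by
          rw [expand]; ring]
      exact Real.arccos_cos h20 h2p
    · rw [show (inner ℝ ((WithLp.equiv 2 (Fin 3 → ℝ)).symm ![(1:ℝ), 0, 0])
          ((WithLp.equiv 2 (Fin 3 → ℝ)).symm ![Real.cos l3, Real.sin l3, 0]) : ℝ)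
          = Real.cos l3 by rw [expand]; ring]
      exact Real.arccos_cos h30 h3p
end

section
/- Given six positive real numbers a, b, c, d, e, f arranged as edge lengths of a combinatorial tetrahedron (a, b, f one face; a, c, e another; b, c, d another; d, e, f the fourth), if each of the four triples satisfies the strict triangle inequality and the Cayley–Menger determinant of the squared lengths is positive, then there exists a nondegenerate tetrahedron in Euclidean ℝ³ whose edge lengths are a, b, c, d, e, f in this combinatorial pattern. -/
/-- The Cayley–Menger determinant of six (squared) edge lengths in the combinatorial
pattern `a = |P₀P₁|`, `b = |P₀P₂|`, `c = |P₀P₃|`, `d = |P₂P₃|`, `e = |P₁P₃|`,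
`f = |P₁P₂|`: the determinant of the 5×5 matrix with rows/columns indexed by
`{∗, 0, 1, 2, 3}`, with `(∗,∗)` entry `0`, entries `(∗,i) = (i,∗) = 1`, and `(i,j)` entry
the squared distance `|PᵢPⱼ|²`. -/
noncomputable def cayleyMenger (a b c d e f : ℝ) : ℝ :=
  Matrix.det !![0, 1,     1,     1,     1;
                1, 0,     a ^ 2, b ^ 2, c ^ 2;
                1, a ^ 2, 0,     f ^ 2, e ^ 2;
                1, b ^ 2, f ^ 2, 0,     d ^ 2;
                1, c ^ 2, e ^ 2, d ^ 2, 0]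

set_option maxHeartbeats 2000000 in
private lemma cm_expand (a b c d e f : ℝ) (ha : a ≠ 0) :
    cayleyMenger a b c d e f =
      8*a^2*(b^2-((a^2+b^2-f^2)/(2*a))^2)*(c^2-((a^2+c^2-e^2)/(2*a))^2)
      - 8*a^2*((b^2+c^2-d^2-2*((a^2+b^2-f^2)/(2*a))*((a^2+c^2-e^2)/(2*a)))^2/4) := by
  unfold cayleyMenger
  simp [Matrix.det_succ_row_zero, Fin.sum_univ_succ, Matrix.submatrix_apply,
      Finset.univ_unique, Matrix.det_unique, Fin.default_eq_zero, Finset.sum_singleton,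
      Fin.val_zero, Fin.val_succ, Fin.zero_succAbove,
      show ((0:Fin 3).succAbove (0:Fin 2)) = 1 from by decide,
      show ((0:Fin 3).succAbove (1:Fin 2)) = 2 from by decide,
      show ((1:Fin 3).succAbove (0:Fin 2)) = 0 from by decide,
      show ((1:Fin 3).succAbove (1:Fin 2)) = 2 from by decide,
      show ((2:Fin 3).succAbove (0:Fin 2)) = 0 from by decide,
      show ((2:Fin 3).succAbove (1:Fin 2)) = 1 from by decide,
      show Fin.succ (0:Fin 2) = 1 from by decide,
      show Fin.castSucc (0:Fin 2) = 0 from by decide,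
      show Fin.succ (1:Fin 2) = 2 from by decide,
      show Fin.castSucc (1:Fin 2) = 1 from by decide,
      show ((0:Fin 4).succAbove (0:Fin 3)) = 1 from by decide,
      show ((0:Fin 4).succAbove (1:Fin 3)) = 2 from by decide,
      show ((0:Fin 4).succAbove (2:Fin 3)) = 3 from by decide,
      show ((1:Fin 4).succAbove (0:Fin 3)) = 0 from by decide,
      show ((1:Fin 4).succAbove (1:Fin 3)) = 2 from by decide,
      show ((1:Fin 4).succAbove (2:Fin 3)) = 3 from by decide,
      show ((2:Fin 4).succAbove (0:Fin 3)) = 0 from by decide,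
      show ((2:Fin 4).succAbove (1:Fin 3)) = 1 from by decide,
      show ((2:Fin 4).succAbove (2:Fin 3)) = 3 from by decide,
      show ((3:Fin 4).succAbove (0:Fin 3)) = 0 from by decide,
      show ((3:Fin 4).succAbove (1:Fin 3)) = 1 from by decide,
      show ((3:Fin 4).succAbove (2:Fin 3)) = 2 from by decide,
      show Fin.succ (0:Fin 3) = 1 from by decide,
      show Fin.castSucc (0:Fin 3) = 0 from by decide,
      show Fin.succ (1:Fin 3) = 2 from by decide,
      show Fin.castSucc (1:Fin 3) = 1 from by decide,
      show Fin.succ (2:Fin 3) = 3 from by decide,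
      show Fin.castSucc (2:Fin 3) = 2 from by decide,
      show ((0:Fin 5).succAbove (0:Fin 4)) = 1 from by decide,
      show ((0:Fin 5).succAbove (1:Fin 4)) = 2 from by decide,
      show ((0:Fin 5).succAbove (2:Fin 4)) = 3 from by decide,
      show ((0:Fin 5).succAbove (3:Fin 4)) = 4 from by decide,
      show ((1:Fin 5).succAbove (0:Fin 4)) = 0 from by decide,
      show ((1:Fin 5).succAbove (1:Fin 4)) = 2 from by decide,
      show ((1:Fin 5).succAbove (2:Fin 4)) = 3 from by decide,
      show ((1:Fin 5).succAbove (3:Fin 4)) = 4 from by decide,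
      show ((2:Fin 5).succAbove (0:Fin 4)) = 0 from by decide,
      show ((2:Fin 5).succAbove (1:Fin 4)) = 1 from by decide,
      show ((2:Fin 5).succAbove (2:Fin 4)) = 3 from by decide,
      show ((2:Fin 5).succAbove (3:Fin 4)) = 4 from by decide,
      show ((3:Fin 5).succAbove (0:Fin 4)) = 0 from by decide,
      show ((3:Fin 5).succAbove (1:Fin 4)) = 1 from by decide,
      show ((3:Fin 5).succAbove (2:Fin 4)) = 2 from by decide,
      show ((3:Fin 5).succAbove (3:Fin 4)) = 4 from by decide,
      show ((4:Fin 5).succAbove (0:Fin 4)) = 0 from by decide,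
      show ((4:Fin 5).succAbove (1:Fin 4)) = 1 from by decide,
      show ((4:Fin 5).succAbove (2:Fin 4)) = 2 from by decide,
      show ((4:Fin 5).succAbove (3:Fin 4)) = 3 from by decide,
      show Fin.succ (0:Fin 4) = 1 from by decide,
      show Fin.castSucc (0:Fin 4) = 0 from by decide,
      show Fin.succ (1:Fin 4) = 2 from by decide,
      show Fin.castSucc (1:Fin 4) = 1 from by decide,
      show Fin.succ (2:Fin 4) = 3 from by decide,
      show Fin.castSucc (2:Fin 4) = 2 from by decide,
      show Fin.succ (3:Fin 4) = 4 from by decide,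
      show Fin.castSucc (3:Fin 4) = 3 from by decide,
      Matrix.cons_val_zero, Matrix.cons_val_one, Matrix.head_cons,
      Matrix.cons_val_two, Matrix.tail_cons, Matrix.cons_val_three, Matrix.cons_val_four,
      Matrix.head_fin_const, Matrix.cons_val_fin_one]
  field_simp
  ring


set_option maxHeartbeats 4000000 in
/-- if the four face triples of `(a,b,c,d,e,f)` satisfy the strict triangle
inequality and the Cayley–Menger determinant is positive, then a nondegenerate tetrahedron
in `ℝ³` with these edge lengths exists. -/
theorem exists_tetrahedron_of_cayleyMenger_pos (a b c d e f : ℝ)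
    (hpos : 0 < a ∧ 0 < b ∧ 0 < c ∧ 0 < d ∧ 0 < e ∧ 0 < f)
    (habf : a < b + f ∧ b < f + a ∧ f < a + b)
    (hace : a < c + e ∧ c < e + a ∧ e < a + c)
    (hbcd : b < c + d ∧ c < d + b ∧ d < b + c)
    (hdef : d < e + f ∧ e < f + d ∧ f < d + e)
    (hcm : 0 < cayleyMenger a b c d e f) :
    ∃ P : Fin 4 → EuclideanSpace ℝ (Fin 3), AffineIndependent ℝ P ∧
      dist (P 0) (P 1) = a ∧ dist (P 0) (P 2) = b ∧ dist (P 0) (P 3) = c ∧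
      dist (P 2) (P 3) = d ∧ dist (P 1) (P 3) = e ∧ dist (P 1) (P 2) = f := by
  obtain ⟨ha, hb, hc, hd, he, hf⟩ := hpos
  have ha' : a ≠ 0 := ne_of_gt ha
  set x2 : ℝ := (a^2+b^2-f^2)/(2*a) with hx2
  set x3 : ℝ := (a^2+c^2-e^2)/(2*a) with hx3
  have key1 : 2*a*x2 = a^2+b^2-f^2 := by rw [hx2]; field_simp
  have key2 : 2*a*x3 = a^2+c^2-e^2 := by rw [hx3]; field_simp
  have hy2sq : (0:ℝ) < b^2 - x2^2 := by
    have hrw : b^2 - x2^2 = ((a+b-f)*(a+b+f)*(f+b-a)*(f+a-b))/(4*a^2) := by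
      rw [hx2]; field_simp; ring
    rw [hrw]
    have p1 : (0:ℝ) < a+b-f := by linarith [habf.2.2]
    have p2 : (0:ℝ) < a+b+f := by linarith
    have p3 : (0:ℝ) < f+b-a := by linarith [habf.1]
    have p4 : (0:ℝ) < f+a-b := by linarith [habf.2.1]
    exact div_pos (by positivity) (by positivity)
  set y2 : ℝ := Real.sqrt (b^2 - x2^2) with hy2def
  have hy2 : 0 < y2 := Real.sqrt_pos.2 hy2sq
  have hy2' : y2 ≠ 0 := ne_of_gt hy2
  have hy2s : y2^2 = b^2 - x2^2 := Real.sq_sqrt hy2sq.le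
  set y3 : ℝ := (b^2+c^2-d^2-2*x2*x3)/(2*y2) with hy3
  have key3 : 2*y2*y3 = b^2+c^2-d^2-2*x2*x3 := by rw [hy3]; field_simp
  have hkey : cayleyMenger a b c d e f = 8*a^2*y2^2*(c^2 - x3^2 - y3^2) := by
    have hys : y2^2*y3^2 = (b^2+c^2-d^2-2*x2*x3)^2/4 := by
      linear_combination (y2*y3 + (b^2+c^2-d^2-2*x2*x3)/2) / 2 * key3
    rw [cm_expand a b c d e f ha', ← hx2, ← hx3]
    linear_combination (-8*a^2*(c^2-x3^2))*hy2s + 8*a^2*hys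
  have hz3sq0 : (0:ℝ) < c^2 - x3^2 - y3^2 := by
    have h := hcm
    rw [hkey] at h
    have h8 : (0:ℝ) < 8*a^2*y2^2 := by positivity
    rcases mul_pos_iff.mp h with ⟨_, ht⟩ | ⟨h1, _⟩
    · exact ht
    · linarith
  set z3 : ℝ := Real.sqrt (c^2 - x3^2 - y3^2) with hz3def
  have hz3 : 0 < z3 := Real.sqrt_pos.2 hz3sq0
  have hz3s : z3^2 = c^2 - x3^2 - y3^2 := Real.sq_sqrt hz3sq0.le
  set v0 : EuclideanSpace ℝ (Fin 3) := WithLp.toLp 2 ![0, 0, 0] with hv0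
  set v1 : EuclideanSpace ℝ (Fin 3) := WithLp.toLp 2 ![a, 0, 0] with hv1
  set v2 : EuclideanSpace ℝ (Fin 3) := WithLp.toLp 2 ![x2, y2, 0] with hv2
  set v3 : EuclideanSpace ℝ (Fin 3) := WithLp.toLp 2 ![x3, y3, z3] with hv3
  set P : Fin 4 → EuclideanSpace ℝ (Fin 3) := ![v0, v1, v2, v3] with hP
  have hdist : ∀ (x y : EuclideanSpace ℝ (Fin 3)),
      dist x y = Real.sqrt ((x 0 - y 0)^2 + ((x 1 - y 1)^2 + ((x 2 - y 2)^2 + 0))) := by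
    intro x y
    rw [EuclideanSpace.dist_eq]
    simp [Fin.sum_univ_succ, Real.dist_eq, sq_abs]
  have hP0 : P 0 = v0 := rfl
  have hP1 : P 1 = v1 := rfl
  have hP2 : P 2 = v2 := rfl
  have hP3 : P 3 = v3 := rfl
  have e01 : dist (P 0) (P 1) = a := by
    rw [hP0, hP1, hdist, hv0, hv1]
    simp only [Matrix.cons_val_zero, Matrix.cons_val_one, Matrix.head_cons,
      Matrix.cons_val_two, Matrix.tail_cons]
    rw [show ((0:ℝ) - a)^2 + (((0:ℝ)-0)^2 + (((0:ℝ)-0)^2 + 0)) = a^2 by ring,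
      Real.sqrt_sq ha.le]
  have e02 : dist (P 0) (P 2) = b := by
    rw [hP0, hP2, hdist, hv0, hv2]
    simp only [Matrix.cons_val_zero, Matrix.cons_val_one, Matrix.head_cons,
      Matrix.cons_val_two, Matrix.tail_cons]
    rw [show ((0:ℝ) - x2)^2 + (((0:ℝ)-y2)^2 + (((0:ℝ)-0)^2 + 0)) = b^2 by
        linear_combination hy2s,
      Real.sqrt_sq hb.le]
  have e03 : dist (P 0) (P 3) = c := by
    rw [hP0, hP3, hdist, hv0, hv3]
    simp only [Matrix.cons_val_zero, Matrix.cons_val_one, Matrix.head_cons,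
      Matrix.cons_val_two, Matrix.tail_cons]
    rw [show ((0:ℝ) - x3)^2 + (((0:ℝ)-y3)^2 + (((0:ℝ)-z3)^2 + 0)) = c^2 by
        linear_combination hz3s,
      Real.sqrt_sq hc.le]
  have e23 : dist (P 2) (P 3) = d := by
    rw [hP2, hP3, hdist, hv2, hv3]
    simp only [Matrix.cons_val_zero, Matrix.cons_val_one, Matrix.head_cons,
      Matrix.cons_val_two, Matrix.tail_cons]
    rw [show (x2 - x3)^2 + ((y2-y3)^2 + (((0:ℝ)-z3)^2 + 0)) = d^2 by
        linear_combination hy2s + hz3s - key3,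
      Real.sqrt_sq hd.le]
  have e13 : dist (P 1) (P 3) = e := by
    rw [hP1, hP3, hdist, hv1, hv3]
    simp only [Matrix.cons_val_zero, Matrix.cons_val_one, Matrix.head_cons,
      Matrix.cons_val_two, Matrix.tail_cons]
    rw [show (a - x3)^2 + (((0:ℝ)-y3)^2 + (((0:ℝ)-z3)^2 + 0)) = e^2 by
        linear_combination hz3s - key2,
      Real.sqrt_sq he.le]
  have e12 : dist (P 1) (P 2) = f := by
    rw [hP1, hP2, hdist, hv1, hv2]
    simp only [Matrix.cons_val_zero, Matrix.cons_val_one, Matrix.head_cons,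
      Matrix.cons_val_two, Matrix.tail_cons]
    rw [show (a - x2)^2 + (((0:ℝ)-y2)^2 + (((0:ℝ)-0)^2 + 0)) = f^2 by
        linear_combination hy2s - key1,
      Real.sqrt_sq hf.le]
  have hAI : AffineIndependent ℝ P := by
    rw [affineIndependent_iff_linearIndependent_vsub ℝ P 0]
    have hdet : (!![a,0,0; x2,y2,0; x3,y3,z3] : Matrix (Fin 3) (Fin 3) ℝ).det ≠ 0 := by
      have hdv : (!![a,0,0; x2,y2,0; x3,y3,z3] : Matrix (Fin 3) (Fin 3) ℝ).det
          = a * y2 * z3 := by simp [Matrix.det_fin_three]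
      rw [hdv]
      exact mul_ne_zero (mul_ne_zero ha' hy2') (ne_of_gt hz3)
    have hM : LinearIndependent ℝ
        (fun i => (!![a,0,0; x2,y2,0; x3,y3,z3] : Matrix (Fin 3) (Fin 3) ℝ) i) :=
      Matrix.linearIndependent_rows_iff_isUnit.2
        ((Matrix.isUnit_iff_isUnit_det _).2 (isUnit_iff_ne_zero.2 hdet))
    have hM' : LinearIndependent ℝ
        (fun i : Fin 3 => (![v1 - v0, v2 - v0, v3 - v0] : Fin 3 → EuclideanSpace ℝ (Fin 3)) i) := by
      have hfeq : (fun i : Fin 3 => (![v1 - v0, v2 - v0, v3 - v0] : Fin 3 → EuclideanSpace ℝ (Fin 3)) i)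
          = (fun i => WithLp.toLp 2 ((!![a,0,0; x2,y2,0; x3,y3,z3] : Matrix (Fin 3) (Fin 3) ℝ) i)) := by
        funext i
        fin_cases i <;> ext j <;> fin_cases j <;> (try simp [hv0, hv1, hv2, hv3]) <;> (try rfl)
      exact hfeq ▸ hM.map' (WithLp.linearEquiv 2 ℝ (Fin 3 → ℝ)).symm.toLinearMap (LinearEquiv.ker _)
    have hg : Function.Injective
        (fun i : {x : Fin 4 // x ≠ 0} => Fin.pred i.1 i.2) := by
      rintro ⟨i, hi⟩ ⟨j, hj⟩ h
      simp only at h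
      exact Subtype.ext (by rwa [Fin.pred_inj] at h)
    have := hM'.comp _ hg
    convert this using 1
    funext i
    obtain ⟨i, hi⟩ := i
    fin_cases i
    · exact absurd rfl hi
    · show P 1 -ᵥ P 0 = v1 - v0; rw [hP1, hP0]; rfl
    · show P 2 -ᵥ P 0 = v2 - v0; rw [hP2, hP0]; rfl
    · show P 3 -ᵥ P 0 = v3 - v0; rw [hP3, hP0]; rfl
    rfl
  exact ⟨P, hAI, e01, e02, e03, e23, e13, e12⟩
end

section
/- Conversely, given nonnegative reals a, b, c, d, e such that (a,b,e) and (e,c,d) both satisfy the real triangle inequality, there exists a quadruple (u,v,w,x) of vectors in ℝ³ with |u|=a, |v|=b, |w|=c, |x|=d, u+v+w+x=0, and |u+v| = e. -/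
/-- The real triangle inequality for a triple of reals. -/
def RealTriangle (x y z : ℝ) : Prop := x ≤ y + z ∧ y ≤ z + x ∧ z ≤ x + y

lemma aux_triangle (x y z : ℝ) (hx : 0 ≤ x) (hy : 0 ≤ y) (hz : 0 ≤ z)
    (t1 : x ≤ y + z) (t2 : y ≤ z + x) (t3 : z ≤ x + y) :
    ∃ u : EuclideanSpace ℝ (Fin 3),
      ‖u‖ = x ∧ ‖(EuclideanSpace.single 0 z : EuclideanSpace ℝ (Fin 3)) - u‖ = y := by
  rcases eq_or_lt_of_le hz with hz0 | hzpos
  · -- z = 0, so x = y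
    have hxy : x = y := le_antisymm (by linarith) (by linarith)
    refine ⟨EuclideanSpace.single 0 x, ?_, ?_⟩
    · simp [hx]
    · rw [← hz0]
      simp [EuclideanSpace.norm_eq, Fin.sum_univ_three, EuclideanSpace.single_apply,
        Real.sqrt_sq hx, ← hxy]
  · set c : ℝ := (x ^ 2 + z ^ 2 - y ^ 2) / (2 * z) with hc
    have hc2 : c ^ 2 ≤ x ^ 2 := by
      rw [hc, div_pow]
      rw [div_le_iff₀ (by positivity)]
      have e1 : 0 ≤ (x + z) ^ 2 - y ^ 2 := by nlinarith
      have e2 : 0 ≤ y ^ 2 - (x - z) ^ 2 := by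
        have : |x - z| ≤ y := abs_le.2 ⟨by linarith, by linarith⟩
        nlinarith [sq_abs (x - z), sq_nonneg (|x - z| + y)]
      nlinarith [mul_nonneg e1 e2]
    set s : ℝ := Real.sqrt (x ^ 2 - c ^ 2) with hs
    have hs2 : s ^ 2 = x ^ 2 - c ^ 2 := Real.sq_sqrt (by linarith)
    have hzc : 2 * z * c = x ^ 2 + z ^ 2 - y ^ 2 := by
      rw [hc, mul_div_assoc']; exact mul_div_cancel_left₀ _ (by positivity)
    refine ⟨(EuclideanSpace.single 0 c : EuclideanSpace ℝ (Fin 3)) +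
      EuclideanSpace.single 1 s, ?_, ?_⟩
    · rw [EuclideanSpace.norm_eq]
      simp only [Fin.sum_univ_three, PiLp.add_apply, EuclideanSpace.single_apply]
      norm_num [show (2:Fin 3) ≠ 0 from by decide, show (2:Fin 3) ≠ 1 from by decide]
      rw [hs2]
      rw [show c ^ 2 + (x ^ 2 - c ^ 2) = x ^ 2 by ring, Real.sqrt_sq hx]
    · rw [EuclideanSpace.norm_eq]
      simp only [Fin.sum_univ_three, PiLp.sub_apply, PiLp.add_apply,
        EuclideanSpace.single_apply]
      norm_num [show (2:Fin 3) ≠ 0 from by decide, show (2:Fin 3) ≠ 1 from by decide]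
      rw [hs2]
      rw [show (z - c) ^ 2 + (x ^ 2 - c ^ 2) = y ^ 2 by nlinarith [hzc], Real.sqrt_sq hy]

/-- any admissible diagonal value `e` is attained on the space of closed
quadrilaterals in `ℝ³` with side lengths `a, b, c, d`. -/
theorem quadrilateral_diagonal_attained (a b c d e : ℝ)
    (ha : 0 ≤ a) (hb : 0 ≤ b) (hc : 0 ≤ c) (hd : 0 ≤ d) (he : 0 ≤ e)
    (h1 : RealTriangle a b e) (h2 : RealTriangle e c d) :
    ∃ u v w x : EuclideanSpace ℝ (Fin 3),
      ‖u‖ = a ∧ ‖v‖ = b ∧ ‖w‖ = c ∧ ‖x‖ = d ∧ u + v + w + x = 0 ∧ ‖u + v‖ = e := by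
  obtain ⟨ht1, ht2, ht3⟩ := h1
  obtain ⟨hs1, hs2, hs3⟩ := h2
  set p : EuclideanSpace ℝ (Fin 3) := EuclideanSpace.single 0 e with hp
  obtain ⟨u, hu, hv⟩ := aux_triangle a b e ha hb he ht1 ht2 ht3
  obtain ⟨w', hw', hx'⟩ := aux_triangle c d e hc hd he hs2 hs3 hs1
  refine ⟨u, p - u, -w', w' - p, hu, hv, by simp [hw'], ?_, by abel, ?_⟩
  · rw [show w' - p = -(p - w') by abel, norm_neg]; exact hx'
  · rw [show u + (p - u) = p by abel, hp]
    simp [he]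
end

section
/- For the unit-sphere conjugacy-class model of SU(2): if A, B ∈ SU(2) have traces 2cos α and 2cos β respectively (α, β ∈ [0, π]), then the trace of AB equals 2cos γ for some γ ∈ [0, π] satisfying |α − β| ≤ γ ≤ min(α + β, 2π − α − β). -/
open Real

lemma arccos_antitone : Antitone Real.arccos := fun x y h => by
  simp only [Real.arccos]
  linarith [Real.monotone_arcsin h]

lemma su2_adjugate (M : Matrix (Fin 2) (Fin 2) ℂ)
    (hu : star M * M = 1) (hd : M.det = 1) :
    star M = Matrix.adjugate M := by
  have h1 : M * Matrix.adjugate M = 1 := by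
    rw [Matrix.mul_adjugate, hd, one_smul]
  calc star M = star M * (M * Matrix.adjugate M) := by rw [h1, mul_one]
    _ = (star M * M) * Matrix.adjugate M := by rw [mul_assoc]
    _ = Matrix.adjugate M := by rw [hu, one_mul]

set_option maxHeartbeats 1600000 in
/-- if `A, B ∈ SU(2)` have traces `2cos α`, `2cos β` with `α, β ∈ [0, π]`,
then `trace(AB) = 2cos γ` for some `γ ∈ [0, π]` with `|α − β| ≤ γ ≤ min(α+β, 2π−α−β)`. -/
theorem su2_trace_of_product (A B : SU2) (α β : ℝ)
    (hα : α ∈ Set.Icc 0 π) (hβ : β ∈ Set.Icc 0 π)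
    (hA : Matrix.trace (A : Matrix (Fin 2) (Fin 2) ℂ) = ((2 * Real.cos α : ℝ) : ℂ))
    (hB : Matrix.trace (B : Matrix (Fin 2) (Fin 2) ℂ) = ((2 * Real.cos β : ℝ) : ℂ)) :
    ∃ γ : ℝ, γ ∈ Set.Icc 0 π ∧
      Matrix.trace ((A * B : SU2) : Matrix (Fin 2) (Fin 2) ℂ) = ((2 * Real.cos γ : ℝ) : ℂ) ∧
      |α - β| ≤ γ ∧ γ ≤ min (α + β) (2 * π - α - β) := by
  obtain ⟨hAu, hAdet⟩ := Matrix.mem_specialUnitaryGroup_iff.1 A.2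
  obtain ⟨hBu, hBdet⟩ := Matrix.mem_specialUnitaryGroup_iff.1 B.2
  set M : Matrix (Fin 2) (Fin 2) ℂ := (A : Matrix (Fin 2) (Fin 2) ℂ) with hM
  set N : Matrix (Fin 2) (Fin 2) ℂ := (B : Matrix (Fin 2) (Fin 2) ℂ) with hN
  have hMadj : star M = Matrix.adjugate M := su2_adjugate M hAu.1 hAdet
  have hNadj : star N = Matrix.adjugate N := su2_adjugate N hBu.1 hBdet
  -- entry relations
  have hM11 : M 1 1 = starRingEnd ℂ (M 0 0) := by
    have := congrFun (congrFun hMadj 0) 0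
    simp [Matrix.star_eq_conjTranspose, Matrix.conjTranspose_apply, Matrix.adjugate_fin_two] at this
    rw [← this]
  have hM10 : M 1 0 = -starRingEnd ℂ (M 0 1) := by
    have := congrFun (congrFun hMadj 0) 1
    simp [Matrix.star_eq_conjTranspose, Matrix.conjTranspose_apply, Matrix.adjugate_fin_two] at this
    rw [← neg_eq_iff_eq_neg.2 this, map_neg, RingHomCompTriple.comp_apply]
    simp
  have hN11 : N 1 1 = starRingEnd ℂ (N 0 0) := by
    have := congrFun (congrFun hNadj 0) 0
    simp [Matrix.star_eq_conjTranspose, Matrix.conjTranspose_apply, Matrix.adjugate_fin_two] at this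
    rw [← this]
  have hN10 : N 1 0 = -starRingEnd ℂ (N 0 1) := by
    have := congrFun (congrFun hNadj 0) 1
    simp [Matrix.star_eq_conjTranspose, Matrix.conjTranspose_apply, Matrix.adjugate_fin_two] at this
    rw [← neg_eq_iff_eq_neg.2 this, map_neg, RingHomCompTriple.comp_apply]
    simp
  set a := M 0 0; set b := M 0 1; set p := N 0 0; set q := N 0 1
  -- norm relations
  have hMnorm : a.re ^ 2 + a.im ^ 2 + (b.re ^ 2 + b.im ^ 2) = 1 := by
    have h := congrFun (congrFun hAu.1 0) 0
    simp only [Matrix.mul_apply, Fin.sum_univ_two, Matrix.star_eq_conjTranspose,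
      Matrix.conjTranspose_apply, Matrix.one_apply_eq, hM10] at h
    have := congrArg Complex.re h
    simp [Complex.mul_re] at this
    nlinarith [this]
  have hNnorm : p.re ^ 2 + p.im ^ 2 + (q.re ^ 2 + q.im ^ 2) = 1 := by
    have h := congrFun (congrFun hBu.1 0) 0
    simp only [Matrix.mul_apply, Fin.sum_univ_two, Matrix.star_eq_conjTranspose,
      Matrix.conjTranspose_apply, Matrix.one_apply_eq, hN10] at h
    have := congrArg Complex.re h
    simp [Complex.mul_re] at this
    nlinarith [this]
  -- trace relations
  have hare : a.re = Real.cos α := by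
    have h : M 0 0 + M 1 1 = ((2 * Real.cos α : ℝ) : ℂ) := by
      rw [← hA]; simp [Matrix.trace, Matrix.diag, Fin.sum_univ_two]
    rw [hM11] at h
    have := congrArg Complex.re h
    simp only [Complex.add_re, Complex.conj_re, Complex.ofReal_re, Complex.ofReal_mul] at this
    simp only [Complex.mul_re, Complex.ofReal_re, Complex.ofReal_im] at this
    linarith
  have hpre : p.re = Real.cos β := by
    have h : N 0 0 + N 1 1 = ((2 * Real.cos β : ℝ) : ℂ) := by
      rw [← hB]; simp [Matrix.trace, Matrix.diag, Fin.sum_univ_two]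
    rw [hN11] at h
    have := congrArg Complex.re h
    simp only [Complex.add_re, Complex.conj_re, Complex.ofReal_re, Complex.ofReal_mul] at this
    simp only [Complex.mul_re, Complex.ofReal_re, Complex.ofReal_im] at this
    linarith
  -- trace of product
  set t : ℝ := a.re * p.re - a.im * p.im - (b.re * q.re + b.im * q.im) with ht
  have htrace : Matrix.trace ((A * B : SU2) : Matrix (Fin 2) (Fin 2) ℂ) = ((2 * t : ℝ) : ℂ) := by
    have hmul : ((A * B : SU2) : Matrix (Fin 2) (Fin 2) ℂ) = M * N := rfl
    rw [hmul]
    simp only [Matrix.trace, Matrix.diag, Fin.sum_univ_two, Matrix.mul_apply]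
    rw [hM10, hM11, hN10, hN11]
    apply Complex.ext <;>
      simp [Complex.mul_re, Complex.mul_im, Complex.add_re, Complex.add_im, ht] <;> ring
  -- key inequality
  obtain ⟨hα0, hαπ⟩ := hα
  obtain ⟨hβ0, hβπ⟩ := hβ
  have hsa : Real.sin α ≥ 0 := Real.sin_nonneg_of_nonneg_of_le_pi hα0 hαπ
  have hsb : Real.sin β ≥ 0 := Real.sin_nonneg_of_nonneg_of_le_pi hβ0 hβπ
  have hsa2 : Real.sin α ^ 2 = 1 - Real.cos α ^ 2 := by
    have := Real.sin_sq_add_cos_sq α; linarith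
  have hsb2 : Real.sin β ^ 2 = 1 - Real.cos β ^ 2 := by
    have := Real.sin_sq_add_cos_sq β; linarith
  have hkey : |a.im * p.im + (b.re * q.re + b.im * q.im)| ≤ Real.sin α * Real.sin β := by
    have e1 : a.im ^ 2 + b.re ^ 2 + b.im ^ 2 = Real.sin α ^ 2 := by
      rw [hsa2, ← hare]; linarith [hMnorm]
    have e2 : p.im ^ 2 + q.re ^ 2 + q.im ^ 2 = Real.sin β ^ 2 := by
      rw [hsb2, ← hpre]; linarith [hNnorm]
    have e3 : (Real.sin α * Real.sin β) ^ 2 =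
        (a.im ^ 2 + b.re ^ 2 + b.im ^ 2) * (p.im ^ 2 + q.re ^ 2 + q.im ^ 2) := by
      rw [mul_pow, e1, e2]
    have hcs : (a.im * p.im + (b.re * q.re + b.im * q.im)) ^ 2 ≤
        (Real.sin α * Real.sin β) ^ 2 := by
      rw [e3]
      nlinarith [sq_nonneg (a.im * q.re - b.re * p.im), sq_nonneg (a.im * q.im - b.im * p.im),
        sq_nonneg (b.re * q.im - b.im * q.re)]
    have h1 := Real.sqrt_le_sqrt hcs
    rw [Real.sqrt_sq_eq_abs, Real.sqrt_sq (mul_nonneg hsa hsb)] at h1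
    exact h1
  have htlo : Real.cos (α + β) ≤ t := by
    rw [Real.cos_add, ht, hare, hpre]
    have := (abs_le.1 hkey).2
    linarith
  have hthi : t ≤ Real.cos (α - β) := by
    rw [Real.cos_sub, ht, hare, hpre]
    have := (abs_le.1 hkey).1
    linarith
  have ht1 : -1 ≤ t := le_trans (Real.neg_one_le_cos _) htlo
  have ht2 : t ≤ 1 := le_trans hthi (Real.cos_le_one _)
  refine ⟨Real.arccos t, ⟨Real.arccos_nonneg t, Real.arccos_le_pi t⟩, ?_, ?_, ?_⟩
  · rw [htrace, Real.cos_arccos ht1 ht2]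
  · have h1 : |α - β| ≤ π := by
      rw [abs_le]; constructor <;> linarith
    have h2 : Real.cos |α - β| = Real.cos (α - β) := by
      rcases abs_cases (α - β) with ⟨h, _⟩ | ⟨h, _⟩
      · rw [h]
      · rw [h, Real.cos_neg]
    calc |α - β| = Real.arccos (Real.cos |α - β|) :=
          (Real.arccos_cos (abs_nonneg _) h1).symm
      _ ≤ Real.arccos t := by
          apply arccos_antitone; rw [h2]; exact hthi
  · have hm : min (α + β) (2 * π - α - β) ∈ Set.Icc (0:ℝ) π := by
      constructor
      · rcases min_cases (α + β) (2 * π - α - β) with ⟨h, _⟩ | ⟨h, _⟩ <;> rw [h] <;>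
          [linarith; linarith [Real.pi_pos]]
      · rcases le_total (α + β) π with h | h
        · exact le_trans (min_le_left _ _) h
        · exact le_trans (min_le_right _ _) (by linarith)
    have hcm : Real.cos (min (α + β) (2 * π - α - β)) = Real.cos (α + β) := by
      rcases min_cases (α + β) (2 * π - α - β) with ⟨h, _⟩ | ⟨h, _⟩
      · rw [h]
      · rw [h]
        have h2 : 2 * π - α - β = -(α + β) + 2 * π := by ring
        rw [h2, Real.cos_add_two_pi, Real.cos_neg]
    calc Real.arccos t ≤ Real.arccos (Real.cos (min (α + β) (2 * π - α - β))) := by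
          apply arccos_antitone; rw [hcm]; exact htlo
      _ = min (α + β) (2 * π - α - β) := Real.arccos_cos hm.1 hm.2
end
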